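/- Let (μ, π) be a standard labeled partition with π ∈ S_n, let j_1 < ··· < j_k be the derangement points of π, and set β = (μ_{j_1}, ..., μ_{j_k}) and σ = dp(π). Then (β, σ) is a standard labeled partition. -/

import Mathlib

open Finset

/-- A labeled partition `(μ, π)` is standard if `π i > π (i+1)` implies `μ i > μ (i+1)`. -/
def IsStandard {n : ℕ} (μ : Fin n → ℕ) (π : Equiv.Perm (Fin n)) : Prop :=
  ∀ i : ℕ, ∀ h : i + 1 < n,
    π ⟨i + 1, h⟩ < π ⟨i, Nat.lt_of_succ_lt h⟩ → μ ⟨i + 1, h⟩ < μ ⟨i, Nat.lt_of_succ_lt h⟩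

/-- The set of derangement points (non-fixed points) of a permutation. -/
def derSet {n : ℕ} (π : Equiv.Perm (Fin n)) : Finset (Fin n) :=
  Finset.univ.filter (fun i => π i ≠ i)

/-- The derangement part of `π`: the permutation of `Fin k` induced by the relative
order of the values of `π` at its derangement points (listed in increasing position order). -/
def dp {n : ℕ} (π : Equiv.Perm (Fin n)) {k : ℕ} (h : (derSet π).card = k) :
    Equiv.Perm (Fin k) :=
  (((derSet π).orderIsoOfFin h).toEquiv.permCongr).symm
    (π.subtypePerm (fun x => by
      simp only [derSet, Finset.mem_filter, Finset.mem_univ, true_and]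
      exact not_congr (Equiv.apply_eq_iff_eq π)))

/-- `dp π = σ`, stated heterogeneously. -/
def dpEq {n k : ℕ} (π : Equiv.Perm (Fin n)) (σ : Equiv.Perm (Fin k)) : Prop :=
  ∃ h : (derSet π).card = k, dp π h = σ

/-- If `(μ, π)` is a standard labeled partition and `β` consists of the entries of `μ`
at the derangement points of `π` (in increasing position order), then `(β, dp π)` is a
standard labeled partition. -/
theorem restriction_to_derangement_points_standard (n k : ℕ)
    (μ : Fin n → ℕ) (π : Equiv.Perm (Fin n)) (hμ : Antitone μ)
    (hstd : IsStandard μ π) (h : (derSet π).card = k) :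
    Antitone (fun j : Fin k => μ ((derSet π).orderIsoOfFin h j)) ∧
      IsStandard (fun j : Fin k => μ ((derSet π).orderIsoOfFin h j)) (dp π h) := by
  set e := (derSet π).orderIsoOfFin h with he
  have ekey : ∀ x : Fin k, ((e (dp π h x) : Fin n)) = π (e x) := by
    intro x
    simp [dp, he, Equiv.permCongr_symm, Equiv.permCongr_apply]
  -- if c is strictly between two consecutive enumerated elements, it's a fixed point
  have fix : ∀ (i : ℕ) (hi : i + 1 < k) (c : Fin n),
      ((e ⟨i, Nat.lt_of_succ_lt hi⟩ : Fin n)) < c → c < (e ⟨i+1, hi⟩ : Fin n) → π c = c := by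
    intro i hi c h1 h2
    by_contra hc
    have hcmem : c ∈ derSet π := by simp [derSet, hc]
    set j := e.symm ⟨c, hcmem⟩ with hj
    have hej : (e j : Fin n) = c := by simp [hj]
    have l1 : (⟨i, Nat.lt_of_succ_lt hi⟩ : Fin k) < j := by
      rw [← e.lt_iff_lt]
      exact Subtype.mk_lt_mk.mpr (hej ▸ h1)
    have l2 : j < ⟨i+1, hi⟩ := by
      rw [← e.lt_iff_lt]
      exact Subtype.mk_lt_mk.mpr (hej ▸ h2)
    have : (i : ℕ) < (j : ℕ) := l1
    have : (j : ℕ) < i + 1 := l2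
    omega
  constructor
  · intro i j hij
    exact hμ (by exact_mod_cast e.monotone hij)
  · intro i hi hlt
    simp only
    set x0 : Fin k := ⟨i, Nat.lt_of_succ_lt hi⟩ with hx0
    set x1 : Fin k := ⟨i+1, hi⟩ with hx1
    have hπlt : π (e x1) < π (e x0) := by
      have h2 := e.lt_iff_lt.mpr hlt
      have h3 : ((e (dp π h x1) : Fin n)) < (e (dp π h x0) : Fin n) := h2
      rwa [ekey, ekey] at h3
    set a : Fin n := (e x0 : Fin n) with ha
    set b : Fin n := (e x1 : Fin n) with hb
    have hab : a < b := by
      have : x0 < x1 := by simp [hx0, hx1, Fin.lt_def]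
      exact e.lt_iff_lt.mpr this
    have hbn : (b : ℕ) < n := b.isLt
    show μ b < μ a
    have fix' : ∀ c : Fin n, a < c → c < b → π c = c := fix i hi
    rcases eq_or_lt_of_le (Nat.succ_le_of_lt hab) with hcons | hgap
    · -- b = a + 1
      have hban : (a:ℕ) + 1 < n := by omega
      have hb' : b = ⟨(a:ℕ)+1, hban⟩ := Fin.ext (show (b:ℕ) = (a:ℕ)+1 by omega)
      have := hstd (a : ℕ) hban (by rw [← hb', Fin.eta]; exact hπlt)
      rwa [← hb', Fin.eta] at this
    · -- a + 1 < b
      have han : (a:ℕ) + 1 < n := lt_trans hgap hbn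
      set a1 : Fin n := ⟨(a:ℕ)+1, han⟩ with ha1
      have hfa1 : π a1 = a1 := fix' a1 (by simp [ha1, Fin.lt_def]) (by simp [ha1, Fin.lt_def]; omega)
      have hπane : π a ≠ a := by
        have : a ∈ derSet π := (e x0).2
        simpa [derSet] using this
      rcases lt_or_gt_of_ne hπane with hlo | hhi
      · -- π a < a : use index b-1
        have hb1 : (b:ℕ) - 1 + 1 < n := by omega
        set b1 : Fin n := ⟨(b:ℕ)-1, by omega⟩ with hbdef
        have hfb1 : π b1 = b1 := fix' b1 (by simp [hbdef, Fin.lt_def]; omega) (by simp [hbdef, Fin.lt_def]; omega)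
        have hbeq : (⟨(b:ℕ)-1+1, hb1⟩ : Fin n) = b := Fin.ext (by simp; omega)
        have hπb : π b < π b1 := by
          rw [hfb1]
          have h1 : (π b : ℕ) < (π a : ℕ) := hπlt
          have h2 : (π a : ℕ) < (a : ℕ) := hlo
          simp only [hbdef, Fin.lt_def]; omega
        have hst := hstd ((b:ℕ)-1) hb1 (by rw [hbeq]; exact hπb)
        rw [hbeq] at hst
        calc μ b < μ b1 := hst
          _ ≤ μ a := hμ (by simp only [hbdef, Fin.le_def]; omega)
      · -- π a > a : use index a
        have hπa1 : π a1 < π a := by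
          rw [hfa1]
          have hne : (π a : ℕ) ≠ (a:ℕ) + 1 := by
            intro hx
            have h1 : π a = a1 := Fin.ext hx
            have h3 : a = a1 := π.injective (by rw [h1, hfa1])
            have := congrArg Fin.val h3
            simp [ha1] at this
          have h1 : (a:ℕ) < (π a : ℕ) := hhi
          simp only [ha1, Fin.lt_def]; omega
        have hst := hstd (a:ℕ) han (by rw [Fin.eta]; exact hπa1)
        rw [Fin.eta] at hst
        calc μ b ≤ μ a1 := hμ (by simp only [ha1, Fin.le_def]; omega)
          _ < μ a := hst
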